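/- Safe feature elimination: consider min over x ∈ R^n of f(x) = ||A x - b||_2 + Σ_i λ_i |x_i| with the regularized matrix A = [Φ; σI] and b = [y; 0], where σ > 0 and y ≠ 0. If for some index i it holds that ||φ_i||_2² + σ² < λ_i², where φ_i is the i-th column of Φ, then every optimal solution x* satisfies x*_i = 0. -/

import Mathlib

private lemma sqrt_sum_sq_add_le' {α : Type*} [Fintype α] (u v : α → ℝ) :
    Real.sqrt (∑ a, (u a + v a) ^ 2) ≤
      Real.sqrt (∑ a, u a ^ 2) + Real.sqrt (∑ a, v a ^ 2) := by
  have h := norm_add_le ((WithLp.equiv 2 (α → ℝ)).symm u) ((WithLp.equiv 2 (α → ℝ)).symm v)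
  simpa [EuclideanSpace.norm_eq, Real.norm_eq_abs, sq_abs] using h

/-- Objective of the regularized square-root LASSO with `A = [Φ; σI]`, `b = [y; 0]`:
`‖Ax - b‖₂ + Σ_i λ_i |x_i|`. -/
noncomputable def rsqrtObj {m n : ℕ} (Φ : Matrix (Fin m) (Fin n) ℝ)
    (y : Fin m → ℝ) (σ : ℝ) (lam : Fin n → ℝ) (x : Fin n → ℝ) : ℝ :=
  Real.sqrt ((∑ k, (Φ.mulVec x - y) k ^ 2) + ∑ j, (σ * x j) ^ 2)
    + ∑ i, lam i * |x i|

theorem safe_feature_elimination {m n : ℕ} (Φ : Matrix (Fin m) (Fin n) ℝ)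
    (y : Fin m → ℝ) (hy : y ≠ 0) (σ : ℝ) (hσ : 0 < σ)
    (lam : Fin n → ℝ) (hlam : ∀ i, 0 ≤ lam i) (i : Fin n)
    (hi : (∑ k, (Φ k i) ^ 2) + σ ^ 2 < (lam i) ^ 2) :
    ∀ xstar : Fin n → ℝ,
      (∀ x : Fin n → ℝ, rsqrtObj Φ y σ lam xstar ≤ rsqrtObj Φ y σ lam x) →
      xstar i = 0 := by
  intro xstar hopt
  by_contra ht
  set t : ℝ := xstar i with htdef
  set x' : Fin n → ℝ := Function.update xstar i 0 with hx'
  have hx'i : x' i = 0 := by simp [hx']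
  have hx'j : ∀ j, j ≠ i → x' j = xstar j := by
    intro j hj; simp [hx', Function.update_of_ne hj]
  -- norm of the i-th column of A
  set c : ℝ := Real.sqrt ((∑ k, (Φ k i) ^ 2) + σ ^ 2) with hc
  have hc_lt : c < lam i := by
    have h1 : c < Real.sqrt ((lam i) ^ 2) := by
      apply Real.sqrt_lt_sqrt _ hi
      positivity
    rwa [Real.sqrt_sq (hlam i)] at h1
  -- the split vectors over Fin m ⊕ Fin n
  set u : Fin m ⊕ Fin n → ℝ :=
    Sum.elim (fun k => Φ.mulVec x' k - y k) (fun j => σ * x' j) with hu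
  set v : Fin m ⊕ Fin n → ℝ :=
    Sum.elim (fun k => Φ k i * t) (fun j => if j = i then σ * t else 0) with hv
  have hsum : ∀ a, u a + v a =
      Sum.elim (fun k => Φ.mulVec xstar k - y k) (fun j => σ * xstar j) a := by
    intro a
    rcases a with k | j
    · have : Φ.mulVec xstar k = Φ.mulVec x' k + Φ k i * t := by
        have hmulz : ∀ z : Fin n → ℝ, Φ.mulVec z k = ∑ j, Φ k j * z j :=
          fun z => rfl
        have hupd : (fun j => Φ k j * x' j)
            = Function.update (fun j => Φ k j * xstar j) i 0 := by
          funext j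
          by_cases hj : j = i
          · subst hj; simp [hx'i]
          · simp [Function.update_of_ne hj, hx'j j hj]
        rw [hmulz, hmulz, hupd, Finset.sum_update_of_mem (Finset.mem_univ i),
          zero_add,
          Finset.sum_eq_sum_sdiff_singleton_add (Finset.mem_univ i)
            (fun j => Φ k j * xstar j), htdef]
      simp [hu, hv, this]; ring
    · by_cases hj : j = i
      · subst hj; simp [hu, hv, hx'i, htdef]
      · simp [hu, hv, hj, hx'j j hj]
  -- quantities
  have hS : ((∑ k, (Φ.mulVec xstar - y) k ^ 2) + ∑ j, (σ * xstar j) ^ 2)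
      = ∑ a, (u a + v a) ^ 2 := by
    rw [Fintype.sum_sum_type]
    simp only [hsum]
    simp [Pi.sub_apply]
  have hS' : ((∑ k, (Φ.mulVec x' - y) k ^ 2) + ∑ j, (σ * x' j) ^ 2)
      = ∑ a, u a ^ 2 := by
    rw [Fintype.sum_sum_type]
    simp [hu, Pi.sub_apply]
  have hv2 : ∑ a, v a ^ 2 = t ^ 2 * ((∑ k, (Φ k i) ^ 2) + σ ^ 2) := by
    rw [Fintype.sum_sum_type]
    have h2 : (∑ j, (if j = i then σ * t else 0) ^ 2) = (σ * t) ^ 2 := by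
      rw [Finset.sum_eq_single i] <;> simp (config := { contextual := true })
    have h1 : (∑ k, (Φ k i * t) ^ 2) = t ^ 2 * ∑ k, (Φ k i) ^ 2 := by
      rw [Finset.mul_sum]; exact Finset.sum_congr rfl fun k _ => by ring
    simp only [hv, Sum.elim_inl, Sum.elim_inr, h1, h2]
    ring
  have hvnorm : Real.sqrt (∑ a, v a ^ 2) = |t| * c := by
    rw [hv2, Real.sqrt_mul (sq_nonneg t), Real.sqrt_sq_eq_abs, hc]
  -- triangle inequality : √S' ≤ √S + |t| c
  have htri : Real.sqrt (∑ a, u a ^ 2)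
      ≤ Real.sqrt (∑ a, (u a + v a) ^ 2) + |t| * c := by
    have h := sqrt_sum_sq_add_le' (fun a => u a + v a) (fun a => -v a)
    simp only [add_neg_cancel_right] at h
    have hnv : (∑ a, (-v a) ^ 2) = ∑ a, v a ^ 2 := by
      apply Finset.sum_congr rfl; intro a _; ring
    rwa [hnv, hvnorm] at h
  -- penalty split
  have hpen : (∑ j, lam j * |x' j|) = (∑ j, lam j * |xstar j|) - lam i * |t| := by
    have hupd : (fun j => lam j * |x' j|)
        = Function.update (fun j => lam j * |xstar j|) i 0 := by
      funext j
      by_cases hj : j = i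
      · subst hj; simp [hx'i]
      · simp [Function.update_of_ne hj, hx'j j hj]
    rw [hupd, Finset.sum_update_of_mem (Finset.mem_univ i), zero_add,
      Finset.sum_eq_sum_sdiff_singleton_add (Finset.mem_univ i)
        (fun j => lam j * |xstar j|), htdef]
    ring
  -- strict decrease
  have hlt : rsqrtObj Φ y σ lam x' < rsqrtObj Φ y σ lam xstar := by
    unfold rsqrtObj
    rw [hS, hS', hpen]
    have habs : 0 < |t| := abs_pos.mpr ht
    have hstep : |t| * c < lam i * |t| := by
      rw [mul_comm (lam i) |t|]
      exact (mul_lt_mul_iff_right₀ habs).mpr hc_lt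
    calc Real.sqrt (∑ a, u a ^ 2) + ((∑ j, lam j * |xstar j|) - lam i * |t|)
        ≤ Real.sqrt (∑ a, (u a + v a) ^ 2) + |t| * c
            + ((∑ j, lam j * |xstar j|) - lam i * |t|) := by linarith
      _ < Real.sqrt (∑ a, (u a + v a) ^ 2) + ∑ j, lam j * |xstar j| := by linarith
  exact absurd (hopt x') (not_le.mpr hlt)
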